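/- Let n and k be positive integers with k < n - k, and suppose that lcm(1, 2, ..., k) divides n - k. If a permutation π of {1, ..., n} has a cycle of length n - k, then the order of π equals n - k. -/
import Mathlib


theorem stmt_0 (n k : ℕ) (hk : 0 < k) (hkn : k < n - k)
    (hdvd : (Finset.Icc 1 k).lcm id ∣ n - k)
    (π : Equiv.Perm (Fin n)) (hc : (n - k) ∈ π.cycleType) :
    orderOf π = n - k := by
  rw [← π.lcm_cycleType]
  apply Nat.dvd_antisymm
  · apply Multiset.lcm_dvd.mpr
    intro b hb
    have hsum : π.cycleType.sum ≤ n := by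
      rw [Equiv.Perm.sum_cycleType]
      simpa using π.support.card_le_univ
    have hcons : (n - k) ::ₘ π.cycleType.erase (n - k) = π.cycleType :=
      Multiset.cons_erase hc
    rcases Multiset.mem_cons.mp (by rw [hcons]; exact hb) with h | h
    · exact h ▸ dvd_rfl
    · have hb2 : 1 ≤ b := (π.one_lt_of_mem_cycleType hb).le
      have : b ≤ (π.cycleType.erase (n - k)).sum :=
        Multiset.single_le_sum (fun x _ => Nat.zero_le x) _ h
      have hterase : (π.cycleType.erase (n - k)).sum ≤ k := by
        have : (n - k) + (π.cycleType.erase (n - k)).sum ≤ n := by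
          rw [← Multiset.sum_cons, hcons]; exact hsum
        omega
      have hbk : b ≤ k := le_trans ‹b ≤ _› hterase
      have hmem : b ∈ Finset.Icc 1 k := Finset.mem_Icc.mpr ⟨hb2, hbk⟩
      have hdl : id b ∣ (Finset.Icc 1 k).lcm id := Finset.dvd_lcm hmem
      exact dvd_trans hdl hdvd
  · exact Multiset.dvd_lcm hc
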